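/- Let 0 < α < 1/2 and β > 0, and let f be the probability density function of the power Lindley distribution PL(α, β). Define h₃(x) = ( sin(β x^α tan(πα) − πα) + x^α sin(β x^α tan(πα) − 2πα) ) / (1 + x^α) for x > 0 and h₃(x) = 0 for x ≤ 0. Then ∫_0^∞ x^k f(x) h₃(x) dx = 0 for every nonnegative integer k. -/

import Mathlib

open Real MeasureTheory
open Set Filter


lemma int_rpow_exp {s b : ℝ} (hs : -1 < s) (hb : 0 < b) :
    IntegrableOn (fun x : ℝ => x ^ s * Real.exp (-(b * x))) (Set.Ioi 0) := by
  have h := integrableOn_rpow_mul_exp_neg_mul_rpow hs zero_lt_one hb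
  refine h.congr_fun (fun x hx => ?_) measurableSet_Ioi
  simp only [Real.rpow_one, neg_mul]

lemma aesm_cpow_exp (c : ℝ) (p : ℂ) :
    AEStronglyMeasurable (fun t : ℝ => (t : ℂ) ^ (c : ℂ) * Complex.exp (-(p * t)))
      (volume.restrict (Set.Ioi 0)) := by
  apply ContinuousOn.aestronglyMeasurable _ measurableSet_Ioi
  apply ContinuousOn.mul
  · intro x hx
    exact (Complex.continuousAt_ofReal_cpow_const x _ (Or.inr (ne_of_gt hx))).continuousWithinAt
  · exact (Complex.continuous_exp.comp (by continuity)).continuousOn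

lemma int_cpow_exp {c : ℝ} (hc : -1 < c) {p : ℂ} (hp : 0 < p.re) :
    IntegrableOn (fun t : ℝ => (t : ℂ) ^ (c : ℂ) * Complex.exp (-(p * t))) (Set.Ioi 0) := by
  refine Integrable.mono' (int_rpow_exp hc hp) (aesm_cpow_exp c p) ?_
  refine (ae_restrict_iff' measurableSet_Ioi).mpr (Filter.Eventually.of_forall fun t ht => ?_)
  rw [norm_mul]
  have h1 : ‖(t : ℂ) ^ (c : ℂ)‖ = t ^ c := by
    rw [Complex.norm_cpow_eq_rpow_re_of_pos ht, Complex.ofReal_re]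
  have h2 : ‖Complex.exp (-(p * t))‖ = Real.exp (-(p.re * t)) := by
    rw [Complex.norm_exp]
    congr 1
    simp [Complex.mul_re]
  rw [h1, h2]

lemma laplace_real {s : ℝ} (hs : 0 < s) {r : ℝ} (hr : 0 < r) :
    ∫ t in Ioi (0:ℝ), (t:ℂ) ^ ((s:ℂ) - 1) * Complex.exp (-((r:ℂ) * t)) =
      (r:ℂ) ^ (-(s:ℂ)) * Complex.Gamma s := by
  have h := Complex.integral_cpow_mul_exp_neg_mul_Ioi (a := (s:ℂ)) (by simpa using hs) hr
  rw [h]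
  congr 1
  rw [one_div, Complex.inv_cpow, ← Complex.cpow_neg]
  rw [Complex.arg_ofReal_of_nonneg hr.le]
  exact Real.pi_ne_zero.symm

lemma laplace_diff {s : ℝ} (hs : 0 < s) :
    DifferentiableOn ℂ
      (fun p : ℂ => ∫ t in Ioi (0:ℝ), (t:ℂ) ^ ((s:ℂ) - 1) * Complex.exp (-(p * t)))
      {p : ℂ | 0 < p.re} := by
  have hcast : ((s - 1 : ℝ) : ℂ) = (s:ℂ) - 1 := by push_cast; ring
  intro p₀ hp₀
  have hp₀' : 0 < p₀.re := hp₀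
  refine DifferentiableAt.differentiableWithinAt ?_
  have hε : 0 < p₀.re / 2 := half_pos hp₀'
  have key := hasDerivAt_integral_of_dominated_loc_of_deriv_le (μ := volume.restrict (Ioi 0))
    (F := fun (p : ℂ) (t : ℝ) => (t:ℂ) ^ ((s:ℂ) - 1) * Complex.exp (-(p * t)))
    (F' := fun (p : ℂ) (t : ℝ) => (t:ℂ) ^ ((s:ℂ) - 1) * (Complex.exp (-(p * t)) * (-(t:ℂ))))
    (x₀ := p₀) (bound := fun t : ℝ => t ^ s * Real.exp (-(p₀.re / 2 * t))) (Metric.ball_mem_nhds p₀ hε)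
    (Filter.Eventually.of_forall fun p => by simpa [hcast] using aesm_cpow_exp (s-1) p)
    (by simpa [hcast, IntegrableOn] using int_cpow_exp (by linarith : (-1:ℝ) < s - 1) hp₀')
    ?_ ?_ (int_rpow_exp (by linarith) hε) ?_
  · exact key.2.differentiableAt
  · have h0 : AEStronglyMeasurable
        (fun t : ℝ => (t:ℂ) ^ ((s:ℂ) - 1) * Complex.exp (-(p₀ * t)))
        (volume.restrict (Ioi 0)) := by simpa [hcast] using aesm_cpow_exp (s-1) p₀
    have h1 : AEStronglyMeasurable
        (fun t : ℝ => ((t:ℂ) ^ ((s:ℂ) - 1) * Complex.exp (-(p₀ * t))) * (-(t:ℂ)))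
        (volume.restrict (Ioi 0)) :=
      h0.mul (Complex.continuous_ofReal.neg.aestronglyMeasurable)
    refine h1.congr (Filter.Eventually.of_forall fun t => by ring)
  · refine (ae_restrict_iff' measurableSet_Ioi).mpr (Filter.Eventually.of_forall fun t ht => ?_)
    intro x hx
    have hxre : p₀.re / 2 ≤ x.re := by
      have h2 : |x.re - p₀.re| ≤ ‖x - p₀‖ := by
        simpa [Complex.sub_re] using Complex.abs_re_le_norm (x - p₀)
      have h3 : ‖x - p₀‖ < p₀.re / 2 := by
        simpa [Metric.mem_ball, Complex.dist_eq] using hx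
      have := abs_sub_le_iff.mp (le_of_lt (lt_of_le_of_lt h2 h3))
      linarith [this.2]
    have ht' : (0:ℝ) < t := ht
    rw [norm_mul, norm_mul, norm_neg]
    have e1 : ‖(t:ℂ) ^ ((s:ℂ) - 1)‖ = t ^ (s - 1) := by
      rw [Complex.norm_cpow_eq_rpow_re_of_pos ht']
      norm_num
    have e2 : ‖Complex.exp (-(x * t))‖ = Real.exp (-(x.re * t)) := by
      rw [Complex.norm_exp]; congr 1; simp [Complex.mul_re]
    have e3 : ‖(t:ℂ)‖ = t := by simp [abs_of_pos ht']
    rw [e1, e2, e3]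
    have e4 : t ^ (s - 1) * (Real.exp (-(x.re * t)) * t) = t ^ s * Real.exp (-(x.re * t)) := by
      rw [show t ^ s = t ^ (s - 1) * t by
        rw [← Real.rpow_add_one (ne_of_gt ht') (s-1)]; ring_nf]
      ring
    rw [e4]
    have e5 : Real.exp (-(x.re * t)) ≤ Real.exp (-(p₀.re / 2 * t)) := by
      apply Real.exp_le_exp.mpr
      nlinarith
    have : (0:ℝ) ≤ t ^ s := Real.rpow_nonneg ht'.le s
    nlinarith
  · refine Filter.Eventually.of_forall fun t => fun x _ => ?_
    have h1 : HasDerivAt (fun p : ℂ => -(p * (t:ℂ))) (-(t:ℂ)) x := by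
      simpa using ((hasDerivAt_id x).mul_const (t:ℂ)).fun_neg
    simpa using (h1.cexp.const_mul ((t:ℂ) ^ ((s:ℂ) - 1)))

lemma laplace_cpow {s : ℝ} (hs : 0 < s) {p : ℂ} (hp : 0 < p.re) :
    ∫ t in Ioi (0:ℝ), (t:ℂ) ^ ((s:ℂ) - 1) * Complex.exp (-(p * t)) =
      p ^ (-(s:ℂ)) * Complex.Gamma s := by
  set H : ℂ → ℂ := fun q => ∫ t in Ioi (0:ℝ), (t:ℂ) ^ ((s:ℂ) - 1) * Complex.exp (-(q * t))
    with hHdef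
  set G : ℂ → ℂ := fun q => q ^ (-(s:ℂ)) * Complex.Gamma s with hGdef
  have hUopen : IsOpen {q : ℂ | 0 < q.re} := isOpen_lt continuous_const Complex.continuous_re
  have hUpre : IsPreconnected {q : ℂ | 0 < q.re} :=
    (convex_halfSpace_re_gt (0:ℝ)).isPreconnected
  have hH : AnalyticOnNhd ℂ H {q : ℂ | 0 < q.re} :=
    (laplace_diff hs).analyticOnNhd hUopen
  have hG : AnalyticOnNhd ℂ G {q : ℂ | 0 < q.re} := by
    apply DifferentiableOn.analyticOnNhd _ hUopen
    intro q hq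
    have hd : HasDerivAt (fun q : ℂ => q ^ (-(s:ℂ))) (-(s:ℂ) * q ^ (-(s:ℂ) - 1)) q := by
      simpa only [id, mul_one] using (hasDerivAt_id q).cpow_const (c := -(s:ℂ)) (Or.inl hq)
    exact (hd.differentiableAt.mul_const _).differentiableWithinAt
  have h1mem : (1:ℂ) ∈ {q : ℂ | 0 < q.re} := by norm_num [Set.mem_setOf_eq]
  have hfreq : ∃ᶠ z in nhdsWithin (1:ℂ) {(1:ℂ)}ᶜ, H z = G z := by
    have htend : Filter.Tendsto (fun n : ℕ => ((1 + ((n:ℝ)+1)⁻¹ : ℝ) : ℂ)) Filter.atTop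
        (nhdsWithin (1:ℂ) {(1:ℂ)}ᶜ) := by
      rw [tendsto_nhdsWithin_iff]
      constructor
      · have t1 : Filter.Tendsto (fun n : ℕ => (1 + ((n:ℝ)+1)⁻¹ : ℝ)) Filter.atTop (nhds (1:ℝ)) := by
          have := tendsto_one_div_add_atTop_nhds_zero_nat (𝕜 := ℝ)
          simpa [one_div] using (tendsto_const_nhds (x := (1:ℝ))).add this
        have := (Complex.continuous_ofReal.tendsto (1:ℝ)).comp t1
        simpa [Function.comp_def] using this
      · refine Filter.Eventually.of_forall fun n => ?_
        simp only [Set.mem_compl_iff, Set.mem_singleton_iff]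
        intro hcon
        have : (1 + ((n:ℝ)+1)⁻¹ : ℝ) = 1 := by exact_mod_cast hcon
        have hpos : (0:ℝ) < ((n:ℝ)+1)⁻¹ := by positivity
        linarith
    refine htend.frequently (Filter.Frequently.of_forall fun n => ?_)
    have hr : (0:ℝ) < 1 + ((n:ℝ)+1)⁻¹ := by positivity
    exact laplace_real hs hr
  exact hH.eqOn_of_preconnected_of_frequently_eq hG hUpre h1mem hfreq hp

lemma sin_moment_zero {s θ β : ℝ} (hs : -1 < s) (hθ0 : 0 < θ) (hθ : θ < π/2) (hβ : 0 < β) :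
    ∫ u in Ioi (0:ℝ), u ^ s * Real.exp (-(β * u)) *
      Real.sin (β * u * Real.tan θ - (s+1) * θ) = 0 := by
  have hcos : 0 < Real.cos θ := Real.cos_pos_of_mem_Ioo ⟨by linarith [Real.pi_pos], hθ⟩
  set r : ℝ := β / Real.cos θ with hrdef
  have hr : 0 < r := div_pos hβ hcos
  set p : ℂ := (β:ℂ) - ((β * Real.tan θ : ℝ):ℂ) * Complex.I with hpdef
  have hppos : 0 < p.re := by
    simp only [hpdef, Complex.sub_re, Complex.ofReal_re, Complex.mul_re, Complex.I_re,
      Complex.I_im, Complex.ofReal_im, mul_zero, mul_one, zero_mul, sub_zero, zero_sub,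
      sub_neg_eq_add, zero_add, neg_zero]
    exact hβ
  set c : ℝ := (s+1) * θ with hcdef
  -- p in polar form
  have h1 : r * Real.cos θ = β := by rw [hrdef]; field_simp
  have h2 : r * Real.sin θ = β * Real.tan θ := by
    rw [Real.tan_eq_sin_div_cos, hrdef]
    field_simp
  have hpeq : p = (r:ℂ) * (Complex.cos ((-θ:ℝ):ℂ) + Complex.sin ((-θ:ℝ):ℂ) * Complex.I) := by
    rw [← Complex.ofReal_cos, ← Complex.ofReal_sin]
    rw [Real.cos_neg, Real.sin_neg]
    have e1 : (β:ℂ) = (r:ℂ) * ((Real.cos θ : ℝ):ℂ) := by rw [← h1]; push_cast; ring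
    have e2 : ((β * Real.tan θ:ℝ):ℂ) = (r:ℂ) * ((Real.sin θ : ℝ):ℂ) := by
      rw [← h2]; push_cast; ring
    rw [hpdef, e1, e2]
    push_cast
    ring
  have hpne : p ≠ 0 := by
    intro h
    rw [h] at hppos
    simp at hppos
  have habs : ‖p‖ = r := by
    rw [hpeq]
    rw [norm_mul, Complex.norm_cos_add_sin_mul_I, Complex.norm_real, Real.norm_eq_abs, abs_of_pos hr, mul_one]
  have harg : Complex.arg p = -θ := by
    rw [hpeq]
    exact Complex.arg_mul_cos_add_sin_mul_I hr
      ⟨by linarith [Real.pi_gt_three], by linarith [Real.pi_gt_three]⟩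
  have hlog : Complex.log p = (Real.log r : ℂ) + ((-θ:ℝ):ℂ) * Complex.I := by
    apply Complex.ext
    · simp [Complex.log_re, habs]
    · simp [Complex.log_im, harg]
  -- value of p ^ (-(s+1))
  have hval : p ^ (-(((s+1):ℝ):ℂ)) =
      ((r ^ (-(s+1)) : ℝ) : ℂ) * Complex.exp ((c:ℂ) * Complex.I) := by
    rw [Complex.cpow_def_of_ne_zero hpne, hlog]
    have : ((Real.log r : ℂ) + ((-θ:ℝ):ℂ) * Complex.I) * (-(((s+1):ℝ):ℂ)) =
        ((Real.log r * (-(s+1)) : ℝ) : ℂ) + ((c:ℝ):ℂ) * Complex.I := by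
      push_cast [hcdef]
      ring
    rw [this, Complex.exp_add]
    congr 1
    rw [← Complex.ofReal_exp]
    congr 1
    rw [Real.rpow_def_of_pos hr]
  have hcast : (((s+1):ℝ):ℂ) - 1 = (s:ℂ) := by push_cast; ring
  have key := laplace_cpow (s := s+1) (by linarith) hppos
  rw [hcast] at key
  -- integrability of complex integrand
  have hint : IntegrableOn (fun t : ℝ => (t:ℂ) ^ ((s:ℂ)) * Complex.exp (-(p * t))) (Ioi 0) :=
    int_cpow_exp hs hppos
  have himem : Integrable
      (fun t : ℝ => Complex.exp (-(c:ℂ) * Complex.I) * ((t:ℂ) ^ ((s:ℂ)) * Complex.exp (-(p * t))))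
      (volume.restrict (Ioi 0)) := hint.const_mul _
  have him : (∫ u in Ioi (0:ℝ), u ^ s * Real.exp (-(β * u)) *
      Real.sin (β * u * Real.tan θ - c))
      = (∫ t in Ioi (0:ℝ),
          Complex.exp (-(c:ℂ) * Complex.I) * ((t:ℂ) ^ ((s:ℂ)) * Complex.exp (-(p * t)))).im := by
    rw [show (∫ t in Ioi (0:ℝ),
          Complex.exp (-(c:ℂ) * Complex.I) * ((t:ℂ) ^ ((s:ℂ)) * Complex.exp (-(p * t)))).im
        = ∫ t in Ioi (0:ℝ), (Complex.exp (-(c:ℂ) * Complex.I) *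
            ((t:ℂ) ^ ((s:ℂ)) * Complex.exp (-(p * t)))).im from by
      rw [← RCLike.im_eq_complex_im, ← integral_im himem]]
    refine setIntegral_congr_fun measurableSet_Ioi fun t ht => ?_
    have ht' : (0:ℝ) < t := ht
    have h1 : ((t:ℂ) ^ ((s:ℂ))) = ((t ^ s : ℝ) : ℂ) := (Complex.ofReal_cpow ht'.le s).symm
    have h2 : -(p * (t:ℂ)) = ((-(β * t) : ℝ):ℂ) + ((β * t * Real.tan θ : ℝ):ℂ) * Complex.I := by
      rw [hpdef]
      push_cast
      ring
    rw [h1, h2, Complex.exp_add, ← Complex.ofReal_exp]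
    have h3 : Complex.exp (-(c:ℂ) * Complex.I) *
        (((t ^ s : ℝ):ℂ) * (((Real.exp (-(β * t)) : ℝ):ℂ) *
          Complex.exp (((β * t * Real.tan θ : ℝ):ℂ) * Complex.I)))
        = ((t ^ s * Real.exp (-(β * t)) : ℝ):ℂ) *
          Complex.exp (((β * t * Real.tan θ - c : ℝ):ℂ) * Complex.I) := by
      have hx : ((β * t * Real.tan θ - c : ℝ):ℂ) * Complex.I =
          ((β * t * Real.tan θ : ℝ):ℂ) * Complex.I + (-(c:ℂ)) * Complex.I := by
        push_cast; ring
      rw [hx, Complex.exp_add]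
      push_cast
      ring
    rw [h3]
    have h4 := Complex.exp_ofReal_mul_I_im (β * t * Real.tan θ - c)
    rw [Complex.mul_im]
    simp only [Complex.ofReal_re, Complex.ofReal_im, zero_mul, add_zero]
    rw [h4]
  -- finish
  rw [hcdef] at him
  rw [him, integral_const_mul, key, hval]
  have hgr : Complex.Gamma (((s+1):ℝ):ℂ) = ((Real.Gamma (s+1) : ℝ):ℂ) := by
    rw [Complex.Gamma_ofReal]
  rw [hgr]
  have : Complex.exp (-(c:ℂ) * Complex.I) *
      (((r ^ (-(s+1)) : ℝ):ℂ) * Complex.exp ((c:ℂ) * Complex.I) *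
        ((Real.Gamma (s+1) : ℝ):ℂ))
      = ((r ^ (-(s+1)) * Real.Gamma (s+1) : ℝ):ℂ) := by
    rw [show Complex.exp (-(c:ℂ) * Complex.I) *
        (((r ^ (-(s+1)) : ℝ):ℂ) * Complex.exp ((c:ℂ) * Complex.I) *
          ((Real.Gamma (s+1) : ℝ):ℂ))
        = ((r ^ (-(s+1)) : ℝ):ℂ) * ((Real.Gamma (s+1) : ℝ):ℂ) *
          (Complex.exp (-(c:ℂ) * Complex.I) * Complex.exp ((c:ℂ) * Complex.I)) from by ring]
    rw [← Complex.exp_add]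
    norm_num
  rw [this]
  simp

lemma int_sin_phi {s β : ℝ} (hs : -1 < s) (hβ : 0 < β) (A B : ℝ) :
    IntegrableOn (fun u : ℝ => u ^ s * Real.exp (-(β * u)) * Real.sin (A * u - B))
      (Set.Ioi 0) := by
  refine Integrable.mono' (int_rpow_exp hs hβ) ?_ ?_
  · apply ContinuousOn.aestronglyMeasurable _ measurableSet_Ioi
    apply ContinuousOn.mul
    · apply ContinuousOn.mul
      · intro x hx
        exact (Real.continuousAt_rpow_const x s (Or.inl (ne_of_gt hx))).continuousWithinAt
      · exact (Real.continuous_exp.comp (by continuity)).continuousOn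
    · exact (Real.continuous_sin.comp (by continuity)).continuousOn
  · refine (ae_restrict_iff' measurableSet_Ioi).mpr (Filter.Eventually.of_forall fun u hu => ?_)
    have hu' : (0:ℝ) < u := hu
    have h1 : (0:ℝ) ≤ u ^ s * Real.exp (-(β * u)) := by positivity
    rw [Real.norm_eq_abs, abs_mul]
    calc |u ^ s * Real.exp (-(β * u))| * |Real.sin (A * u - B)|
        ≤ |u ^ s * Real.exp (-(β * u))| * 1 :=
          mul_le_mul_of_nonneg_left (abs_le.mpr ⟨Real.neg_one_le_sin _, Real.sin_le_one _⟩)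
            (abs_nonneg _)
      _ = u ^ s * Real.exp (-(β * u)) := by rw [mul_one, abs_of_nonneg h1]



/-- For `0 < α < 1/2` and `β > 0`, the function
`h₃(x) = (sin(β x^α tan(πα) - πα) + x^α sin(β x^α tan(πα) - 2πα)) / (1 + x^α)`
(for `x > 0`, zero otherwise) has vanishing moments against the power Lindley density `f`:
`∫_0^∞ x^k f(x) h₃(x) dx = 0` for every nonnegative integer `k`. -/
theorem power_lindley_perturbation_three (α β : ℝ) (hα0 : 0 < α) (hα : α < 1 / 2)
    (hβ : 0 < β)
    (f h₃ : ℝ → ℝ)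
    (hf : ∀ x : ℝ, f x = if 0 < x then
      (α * β ^ 2 / (β + 1)) * (1 + x ^ α) * x ^ (α - 1) * Real.exp (-β * x ^ α) else 0)
    (hh : ∀ x : ℝ, h₃ x = if 0 < x then
      (Real.sin (β * x ^ α * Real.tan (π * α) - π * α) +
        x ^ α * Real.sin (β * x ^ α * Real.tan (π * α) - 2 * π * α)) / (1 + x ^ α) else 0) :
    ∀ k : ℕ, ∫ x in Set.Ioi (0 : ℝ), x ^ k * f x * h₃ x = 0 := by

  intro k
  have hπ := Real.pi_pos
  have hθ0 : 0 < π * α := mul_pos hπ hα0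
  have hθlt : π * α < π / 2 := by nlinarith
  have hβ1 : (0:ℝ) < β + 1 := by linarith
  set s : ℝ := (k:ℝ) / α with hsdef
  have hs0 : 0 ≤ s := div_nonneg (Nat.cast_nonneg k) hα0.le
  have hαs : α * s = (k:ℝ) := by rw [hsdef]; field_simp
  set g : ℝ → ℝ := fun u => (β ^ 2 / (β + 1)) *
      (u ^ s * Real.exp (-(β * u)) * Real.sin (β * u * Real.tan (π * α) - π * α) +
       u ^ (s + 1) * Real.exp (-(β * u)) * Real.sin (β * u * Real.tan (π * α) - 2 * π * α))
    with hgdef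
  have step1 : ∫ x in Set.Ioi (0 : ℝ), x ^ k * f x * h₃ x
      = ∫ x in Set.Ioi (0 : ℝ), (|α| * x ^ (α - 1)) • g (x ^ α) := by
    refine setIntegral_congr_fun measurableSet_Ioi fun x hx => ?_
    have hx' : (0:ℝ) < x := hx
    rw [hf x, hh x, if_pos hx', if_pos hx']
    have hxα : 0 < x ^ α := Real.rpow_pos_of_pos hx' α
    have h1A : (0:ℝ) < 1 + x ^ α := by positivity
    have e1 : (x ^ α) ^ s = (x : ℝ) ^ (k : ℕ) := by
      rw [← Real.rpow_natCast x k, ← hαs, Real.rpow_mul hx'.le]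
    have e2 : (x ^ α) ^ (s + 1) = (x : ℝ) ^ (k : ℕ) * x ^ α := by
      rw [← Real.rpow_natCast x k, ← hαs, ← Real.rpow_mul hx'.le, ← Real.rpow_add hx']
      ring_nf
    have e3 : Real.exp (-β * x ^ α) = Real.exp (-(β * x ^ α)) := by ring_nf
    rw [smul_eq_mul, hgdef]
    simp only []
    rw [e1, e2, e3, abs_of_pos hα0]
    field_simp
  have step2 : ∫ x in Set.Ioi (0 : ℝ), (|α| * x ^ (α - 1)) • g (x ^ α)
      = ∫ u in Set.Ioi (0 : ℝ), g u := integral_comp_rpow_Ioi g hα0.ne'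
  rw [step1, step2]
  have hint1 : IntegrableOn
      (fun u : ℝ => u ^ s * Real.exp (-(β * u)) *
        Real.sin (β * u * Real.tan (π * α) - π * α)) (Set.Ioi 0) := by
    have := int_sin_phi (by linarith : (-1:ℝ) < s) hβ (β * Real.tan (π * α)) (π * α)
    refine this.congr_fun (fun u hu => by ring_nf) measurableSet_Ioi
  have hint2 : IntegrableOn
      (fun u : ℝ => u ^ (s+1) * Real.exp (-(β * u)) *
        Real.sin (β * u * Real.tan (π * α) - 2 * π * α)) (Set.Ioi 0) := by
    have := int_sin_phi (by linarith : (-1:ℝ) < s + 1) hβ (β * Real.tan (π * α)) (2 * π * α)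
    refine this.congr_fun (fun u hu => by ring_nf) measurableSet_Ioi
  have hI1 : ∫ u in Set.Ioi (0:ℝ), u ^ s * Real.exp (-(β * u)) *
      Real.sin (β * u * Real.tan (π * α) - π * α) = 0 := by
    have hz := sin_moment_zero (s := s) (θ := π * α) (β := β) (by linarith) hθ0 hθlt hβ
    have hrel : ∀ u : ℝ, Real.sin (β * u * Real.tan (π * α) - π * α)
        = (-1:ℝ) ^ k * Real.sin (β * u * Real.tan (π * α) - (s + 1) * (π * α)) := by
      intro u
      have harg : β * u * Real.tan (π * α) - (s + 1) * (π * α)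
          = (β * u * Real.tan (π * α) - π * α) - (k : ℕ) * π := by
        have : s * (π * α) = (k:ℝ) * π := by nlinarith [hαs]
        linarith
      rw [harg, Real.sin_sub_nat_mul_pi]
      rw [← mul_assoc, ← pow_add]
      rw [Even.neg_one_pow ⟨k, rfl⟩, one_mul]
    calc ∫ u in Set.Ioi (0:ℝ), u ^ s * Real.exp (-(β * u)) *
          Real.sin (β * u * Real.tan (π * α) - π * α)
        = ∫ u in Set.Ioi (0:ℝ), (-1:ℝ) ^ k * (u ^ s * Real.exp (-(β * u)) *
            Real.sin (β * u * Real.tan (π * α) - (s + 1) * (π * α))) := by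
          refine setIntegral_congr_fun measurableSet_Ioi fun u hu => ?_
          rw [hrel u]; ring
      _ = (-1:ℝ) ^ k * ∫ u in Set.Ioi (0:ℝ), u ^ s * Real.exp (-(β * u)) *
            Real.sin (β * u * Real.tan (π * α) - (s + 1) * (π * α)) := integral_const_mul _ _
      _ = 0 := by rw [hz, mul_zero]
  have hI2 : ∫ u in Set.Ioi (0:ℝ), u ^ (s+1) * Real.exp (-(β * u)) *
      Real.sin (β * u * Real.tan (π * α) - 2 * π * α) = 0 := by
    have hz := sin_moment_zero (s := s + 1) (θ := π * α) (β := β) (by linarith) hθ0 hθlt hβ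
    have hrel : ∀ u : ℝ, Real.sin (β * u * Real.tan (π * α) - 2 * π * α)
        = (-1:ℝ) ^ k * Real.sin (β * u * Real.tan (π * α) - (s + 1 + 1) * (π * α)) := by
      intro u
      have harg : β * u * Real.tan (π * α) - (s + 1 + 1) * (π * α)
          = (β * u * Real.tan (π * α) - 2 * π * α) - (k : ℕ) * π := by
        have : s * (π * α) = (k:ℝ) * π := by nlinarith [hαs]
        linarith
      rw [harg, Real.sin_sub_nat_mul_pi]
      rw [← mul_assoc, ← pow_add]
      rw [Even.neg_one_pow ⟨k, rfl⟩, one_mul]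
    calc ∫ u in Set.Ioi (0:ℝ), u ^ (s+1) * Real.exp (-(β * u)) *
          Real.sin (β * u * Real.tan (π * α) - 2 * π * α)
        = ∫ u in Set.Ioi (0:ℝ), (-1:ℝ) ^ k * (u ^ (s+1) * Real.exp (-(β * u)) *
            Real.sin (β * u * Real.tan (π * α) - (s + 1 + 1) * (π * α))) := by
          refine setIntegral_congr_fun measurableSet_Ioi fun u hu => ?_
          rw [hrel u]; ring
      _ = (-1:ℝ) ^ k * ∫ u in Set.Ioi (0:ℝ), u ^ (s+1) * Real.exp (-(β * u)) *
            Real.sin (β * u * Real.tan (π * α) - (s + 1 + 1) * (π * α)) := integral_const_mul _ _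
      _ = 0 := by rw [hz, mul_zero]
  calc ∫ u in Set.Ioi (0:ℝ), g u
      = (β ^ 2 / (β + 1)) * ∫ u in Set.Ioi (0:ℝ),
          (u ^ s * Real.exp (-(β * u)) * Real.sin (β * u * Real.tan (π * α) - π * α) +
           u ^ (s + 1) * Real.exp (-(β * u)) *
             Real.sin (β * u * Real.tan (π * α) - 2 * π * α)) := by
        rw [hgdef, integral_const_mul]
    _ = (β ^ 2 / (β + 1)) * (0 + 0) := by
        rw [integral_add hint1 hint2, hI1, hI2]
    _ = 0 := by ring
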